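/- Let T be a rooted tree and R a subset of its nodes with |R| ≥ 2. Then the set of all nodes that arise as the least common ancestor of some pair of distinct nodes in R, and which are not themselves in R, has size at most |R| − 1. -/

import Mathlib

private lemma aux_stmt1 {V : Type*} [Fintype V] [SemilatticeSup V]
    (htree : ∀ v : V, IsChain (· ≤ ·) {u : V | v ≤ u}) :
    ∀ n (R : Finset V), R.card ≤ n → 2 ≤ R.card →
    {w : V | w ∉ R ∧ ∃ u ∈ R, ∃ v ∈ R, u ≠ v ∧ w = u ⊔ v}.ncard ≤ R.card - 1 := by
  intro n
  induction n with
  | zero => intro R h1 h2; omega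
  | succ n ih =>
    intro R hRn hR2
    classical
    set L := {w : V | w ∉ R ∧ ∃ u ∈ R, ∃ v ∈ R, u ≠ v ∧ w = u ⊔ v} with hLdef
    by_cases hLe : L = ∅
    · rw [hLe, Set.ncard_empty]; omega
    · have hLfin : L.Finite := Set.toFinite L
      have hFne : hLfin.toFinset.Nonempty := by
        rw [Set.Finite.toFinset_nonempty]
        exact Set.nonempty_iff_ne_empty.mpr hLe
      obtain ⟨w0, hw0F, hmin⟩ := Finset.exists_minimal hFne
      rw [Set.Finite.mem_toFinset] at hw0F
      obtain ⟨hw0R, u, huR, v, hvR, huv, hw0⟩ := hw0F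
      have hmin' : ∀ w ∈ L, ¬ w < w0 := by
        intro w hw
        intro hlt
        exact absurd (hmin (Set.Finite.mem_toFinset hLfin |>.mpr hw) (le_of_lt hlt)) (not_le_of_gt hlt)
      set A := R.filter (fun a => a ≤ w0) with hAdef
      have huA : u ∈ A := Finset.mem_filter.mpr ⟨huR, hw0 ▸ le_sup_left⟩
      have hvA : v ∈ A := Finset.mem_filter.mpr ⟨hvR, hw0 ▸ le_sup_right⟩
      have hAcard : 2 ≤ A.card := Finset.one_lt_card.mpr ⟨u, huA, v, hvA, huv⟩
      set R' := insert w0 (R \ A) with hR'def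
      have hR'le : R'.card ≤ R.card - 1 := by
        have h1 : R'.card ≤ (R \ A).card + 1 := Finset.card_insert_le _ _
        have h2 : (R \ A).card = R.card - A.card :=
          Finset.card_sdiff_of_subset (Finset.filter_subset _ _)
        have h3 : A.card ≤ R.card := Finset.card_le_card (Finset.filter_subset _ _)
        omega
      set L' := {w : V | w ∉ R' ∧ ∃ u ∈ R', ∃ v ∈ R', u ≠ v ∧ w = u ⊔ v} with hL'def
      have hsub : L ⊆ insert w0 L' := by
        rintro w hwL
        obtain ⟨hwR, a, haR, b, hbR, hab, hw⟩ := hwL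
        by_cases hww0 : w = w0
        · exact Set.mem_insert_iff.mpr (Or.inl hww0)
        refine Set.mem_insert_iff.mpr (Or.inr ?_)
        have hwR' : w ∉ R' := by
          simp only [hR'def, Finset.mem_insert, Finset.mem_sdiff, not_or]
          exact ⟨hww0, fun h => hwR h.1⟩
        -- helper: if a ≤ w0 then w = w0 ⊔ b with b ∉ A
        have key : ∀ a b : V, a ∈ R → b ∈ R → a ≠ b → a ≤ w0 → w = a ⊔ b →
            w ∈ L' := by
          intro a b haR hbR hab ha hw
          have haw : a ≤ w := hw ▸ le_sup_left
          have hbw : b ≤ w := hw ▸ le_sup_right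
          have hcomp : w0 ≤ w ∨ w ≤ w0 := by
            have := htree a (x := w0) (y := w) (by exact ha) (by exact haw)
              (fun h => hww0 h.symm)
            tauto
          have hw0w : w0 ≤ w := by
            rcases hcomp with h | h
            · exact h
            · exact absurd (lt_of_le_of_ne h hww0) (hmin' w ⟨hwR, a, haR, b, hbR, hab, hw⟩)
          have hb' : ¬ b ≤ w0 := by
            intro hb
            have : w ≤ w0 := hw ▸ sup_le (ha.trans le_rfl) hb
            exact hww0 (le_antisymm this hw0w)
          have hbR' : b ∈ R' := Finset.mem_insert_of_mem
            (Finset.mem_sdiff.mpr ⟨hbR, fun h => hb' (Finset.mem_filter.mp h).2⟩)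
          have hne : w0 ≠ b := fun h => hw0R (h ▸ hbR)
          have heq : w = w0 ⊔ b := le_antisymm
            (hw ▸ sup_le_sup_right ha b) (sup_le hw0w hbw)
          exact ⟨hwR', w0, Finset.mem_insert_self _ _, b, hbR', hne, heq⟩
        by_cases ha : a ≤ w0
        · exact key a b haR hbR hab ha hw
        by_cases hb : b ≤ w0
        · exact key b a hbR haR hab.symm hb (hw.trans (sup_comm a b))
        · have haR' : a ∈ R' := Finset.mem_insert_of_mem
            (Finset.mem_sdiff.mpr ⟨haR, fun h => ha (Finset.mem_filter.mp h).2⟩)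
          have hbR' : b ∈ R' := Finset.mem_insert_of_mem
            (Finset.mem_sdiff.mpr ⟨hbR, fun h => hb (Finset.mem_filter.mp h).2⟩)
          exact ⟨hwR', a, haR', b, hbR', hab, hw⟩
      have hcard1 : L.ncard ≤ (insert w0 L').ncard :=
        Set.ncard_le_ncard hsub (Set.toFinite _)
      have hcard2 : (insert w0 L').ncard ≤ L'.ncard + 1 := Set.ncard_insert_le _ _
      by_cases hR'2 : 2 ≤ R'.card
      · have hIH : L'.ncard ≤ R'.card - 1 := ih R' (by omega) hR'2
        omega
      · have hL'e : L' = ∅ := by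
          ext w
          simp only [Set.mem_empty_iff_false, iff_false, hL'def, Set.mem_setOf_eq]
          rintro ⟨-, u, hu, v, hv, huv, -⟩
          exact hR'2 (Finset.one_lt_card.mpr ⟨u, hu, v, hv, huv⟩)
        have h0 : L'.ncard = 0 := by rw [hL'e]; exact Set.ncard_empty _
        omega

/-- In a rooted tree (modeled as a finite sup-semilattice in which
`v ≤ u` means "u is an ancestor of v", so that the ancestors of any node form a
chain and `u ⊔ v` is the least common ancestor of `u` and `v`), for any subset
`R` of nodes with `|R| ≥ 2`, the set of nodes that are the LCA of some pair of
distinct nodes of `R` but are not themselves in `R` has size at most `|R| - 1`. -/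
theorem stmt_1 {V : Type*} [Fintype V] [SemilatticeSup V]
    (htree : ∀ v : V, IsChain (· ≤ ·) {u : V | v ≤ u})
    (R : Finset V) (hR : 2 ≤ R.card) :
    {w : V | w ∉ R ∧ ∃ u ∈ R, ∃ v ∈ R, u ≠ v ∧ w = u ⊔ v}.ncard ≤ R.card - 1 :=
  aux_stmt1 htree R.card R le_rfl hR
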